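/- arXiv:2407.13169 — 3 statements merged into one kernel-verified Lean document; each statement's English description precedes it below -/
import Mathlib

section
/- (1/2)·E[(Y′ − Y)²] = σ² + m·τ²·(1 − (1/m)·Σ_{j=1}^m Σ_{b=1}^{B_j} φ_{bj} · φ′_{bj}), i.e., the semivariogram of the RPBART model conditional on the trees and bandwidth parameters equals the noise variance plus m·τ² times one minus the average probability that the two inputs are assigned to the same terminal-node partition. -/
open MeasureTheory ProbabilityTheory

/-- Codomain of the bundled per-tree data (for `some j`) and of the noise pair (for `none`). -/
def mixSpace (m : ℕ) (B : Fin m → ℕ) : Option (Fin m) → Type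
  | none => ℝ × ℝ
  | some j => (Fin (B j) → ℝ) × (Fin (B j) → ℝ) × (Fin (B j) → ℝ)

instance mixSpaceMeasurableSpace (m : ℕ) (B : Fin m → ℕ) :
    (i : Option (Fin m)) → MeasurableSpace (mixSpace m B i)
  | none => inferInstanceAs (MeasurableSpace (ℝ × ℝ))
  | some j =>
      inferInstanceAs (MeasurableSpace ((Fin (B j) → ℝ) × (Fin (B j) → ℝ) × (Fin (B j) → ℝ)))

/-- Bundle the per-tree collections `(μ_{·j}, z_{·j}, z′_{·j})` and the noise pair `(ε, ε′)`
into a single family indexed by `Option (Fin m)`. -/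
def mixBundle {Ω : Type*} {m : ℕ} {B : Fin m → ℕ}
    (μ z z' : (j : Fin m) → Fin (B j) → Ω → ℝ) (ε ε' : Ω → ℝ) :
    (i : Option (Fin m)) → Ω → mixSpace m B i
  | none => fun ω => (ε ω, ε' ω)
  | some j => fun ω => (fun b => μ j b ω, fun b => z j b ω, fun b => z' j b ω)

section Aux
variable {Ω : Type*} [MeasureSpace Ω] [IsProbabilityMeasure (ℙ : Measure Ω)]

omit [IsProbabilityMeasure (ℙ : Measure Ω)] in
lemma aux_integrable_mul {f g : Ω → ℝ} (hf : MemLp f 2 ℙ) (hg : MemLp g 2 ℙ) :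
    Integrable (fun ω => f ω * g ω) ℙ := by
  have h : MemLp (g • f) 1 ℙ := hf.smul (r := 1) hg
  have he : (g • f) = fun ω => f ω * g ω := by funext ω; simp [mul_comm]
  rw [he] at h
  exact memLp_one_iff_integrable.mp h

lemma aux_memℒp01 {f : Ω → ℝ} (hm : Measurable f) (h01 : ∀ ω, f ω = 0 ∨ f ω = 1) :
    MemLp f 2 ℙ :=
  MemLp.of_bound hm.aestronglyMeasurable 1
    (ae_of_all _ fun ω => by rcases h01 ω with h | h <;> simp [h])

omit [IsProbabilityMeasure (ℙ : Measure Ω)] in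
lemma aux_integral01 {f : Ω → ℝ} (hm : Measurable f) (h01 : ∀ ω, f ω = 0 ∨ f ω = 1) :
    𝔼[f] = (ℙ {ω | f ω = 1}).toReal := by
  have hs : MeasurableSet {ω | f ω = 1} := hm (measurableSet_singleton 1)
  have hf : f = Set.indicator {ω | f ω = 1} (fun _ => (1 : ℝ)) := by
    funext ω
    rcases h01 ω with h | h <;>
      simp [Set.indicator_apply, Set.mem_setOf_eq, h]
  rw [hf, integral_indicator_const (1 : ℝ) hs]
  simp; rfl

/-- Read off the relevant real statistic from each component of the bundle. -/
def mixF {m : ℕ} {B : Fin m → ℕ} : (i : Option (Fin m)) → mixSpace m B i → ℝ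
  | none => fun p => p.2 - p.1
  | some _ => fun p => ∑ b, p.1 b * (p.2.2 b - p.2.1 b)

lemma mixF_meas {m : ℕ} {B : Fin m → ℕ} : ∀ i, Measurable (mixF (m := m) (B := B) i)
  | none => measurable_snd.sub measurable_fst
  | some j => Finset.measurable_sum _ fun b _ =>
      ((measurable_pi_apply b).comp measurable_fst).mul
        (((measurable_pi_apply b).comp (measurable_snd.comp measurable_snd)).sub
          ((measurable_pi_apply b).comp (measurable_fst.comp measurable_snd)))

end Aux

/-- **Conditional semivariogram of RPBART.**
`(1/2)·E[(Y′ − Y)²] = σ² + m·τ²·(1 − (1/m)·Σ_{j=1}^m Σ_{b=1}^{B_j} φ_{bj}·φ′_{bj})`: the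
semivariogram of the RPBART model conditional on the trees and bandwidth parameters equals
the noise variance plus `m·τ²` times one minus the average probability that the two inputs
are assigned to the same terminal-node partition. -/
theorem rpbart_conditional_semivariogram
    {Ω : Type*} [MeasureSpace Ω] [IsProbabilityMeasure (ℙ : Measure Ω)]
    (m : ℕ) (hm : 1 ≤ m) (B : Fin m → ℕ) (hB : ∀ j, 1 ≤ B j)
    (τ σ : ℝ) (hτ : 0 < τ) (hσ : 0 ≤ σ)
    (μ z z' : (j : Fin m) → Fin (B j) → Ω → ℝ)
    (φ φ' : (j : Fin m) → Fin (B j) → ℝ)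
    (ε ε' : Ω → ℝ)
    (hμL2 : ∀ j b, MemLp (μ j b) 2 ℙ)
    (hμmean : ∀ j b, 𝔼[μ j b] = 0)
    (hμvar : ∀ j b, variance (μ j b) ℙ = τ ^ 2)
    (hμindep : ∀ j, iIndepFun (μ j) ℙ)
    (hzmeas : ∀ j b, Measurable (z j b)) (hz'meas : ∀ j b, Measurable (z' j b))
    (hz01 : ∀ j b ω, z j b ω = 0 ∨ z j b ω = 1)
    (hz'01 : ∀ j b ω, z' j b ω = 0 ∨ z' j b ω = 1)
    (hzsum : ∀ j, ∀ᵐ ω ∂ℙ, (∑ b, z j b ω) = 1)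
    (hz'sum : ∀ j, ∀ᵐ ω ∂ℙ, (∑ b, z' j b ω) = 1)
    (hzprob : ∀ j b, (ℙ {ω | z j b ω = 1}).toReal = φ j b)
    (hz'prob : ∀ j b, (ℙ {ω | z' j b ω = 1}).toReal = φ' j b)
    (hμ_zz' : ∀ j, IndepFun (fun ω (b : Fin (B j)) => μ j b ω)
        (fun ω => ((fun b => z j b ω), fun b => z' j b ω)) ℙ)
    (hzz' : ∀ j b d, IndepFun (z j b) (z' j d) ℙ)
    (hεL2 : MemLp ε 2 ℙ) (hε'L2 : MemLp ε' 2 ℙ)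
    (hεmean : 𝔼[ε] = 0) (hε'mean : 𝔼[ε'] = 0)
    (hεvar : variance ε ℙ = σ ^ 2) (hε'var : variance ε' ℙ = σ ^ 2)
    (hεcov : 𝔼[fun ω => ε ω * ε' ω] - 𝔼[ε] * 𝔼[ε'] = 0)
    (hmutual : iIndepFun (mixBundle μ z z' ε ε') ℙ) :
    (1 / 2) * 𝔼[fun ω =>
        (((∑ j, ∑ b, μ j b ω * z' j b ω) + ε' ω)
          - ((∑ j, ∑ b, μ j b ω * z j b ω) + ε ω)) ^ 2]
      = σ ^ 2 + m * τ ^ 2 * (1 - (1 / (m : ℝ)) * ∑ j, ∑ b, φ j b * φ' j b) := by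
  classical
  have hm' : (m : ℝ) ≠ 0 := Nat.cast_ne_zero.mpr (by omega)
  -- basic MemLp facts
  have hwmeas : ∀ j b, Measurable (fun ω => z' j b ω - z j b ω) :=
    fun j b => (hz'meas j b).sub (hzmeas j b)
  have hterm2 : ∀ j b, MemLp (fun ω => μ j b ω * (z' j b ω - z j b ω)) 2 ℙ := by
    intro j b
    refine MemLp.of_le (hμL2 j b)
      ((hμL2 j b).aestronglyMeasurable.mul (hwmeas j b).aestronglyMeasurable)
      (ae_of_all _ fun ω => ?_)
    have hb : |z' j b ω - z j b ω| ≤ 1 := by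
      rcases hz01 j b ω with h | h <;> rcases hz'01 j b ω with h' | h' <;>
        simp [h, h']
    calc ‖μ j b ω * (z' j b ω - z j b ω)‖
        = ‖μ j b ω‖ * |z' j b ω - z j b ω| := by
          rw [norm_mul]; rfl
      _ ≤ ‖μ j b ω‖ * 1 := by
          exact mul_le_mul_of_nonneg_left hb (norm_nonneg _)
      _ = ‖μ j b ω‖ := mul_one _
  -- the per-tree deviations and noise deviation
  set D : Fin m → Ω → ℝ :=
    fun j ω => ∑ b, μ j b ω * (z' j b ω - z j b ω) with hDdef
  set E : Ω → ℝ := fun ω => ε' ω - ε ω with hEdef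
  have hD2 : ∀ j, MemLp (D j) 2 ℙ := fun j =>
    memLp_finset_sum _ (fun b _ => hterm2 j b)
  have hE2 : MemLp E 2 ℙ := hε'L2.sub hεL2
  -- zero means
  have hμw_fact : ∀ j b, 𝔼[fun ω => μ j b ω * (z' j b ω - z j b ω)]
      = 𝔼[μ j b] * 𝔼[fun ω => z' j b ω - z j b ω] := by
    intro j b
    have hψ : Measurable (fun p : (Fin (B j) → ℝ) × (Fin (B j) → ℝ) => p.2 b - p.1 b) :=
      ((measurable_pi_apply b).comp measurable_snd).sub
        ((measurable_pi_apply b).comp measurable_fst)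
    exact ((hμ_zz' j).comp (measurable_pi_apply b) hψ).integral_mul_eq_mul_integral
      (hμL2 j b).aestronglyMeasurable (hwmeas j b).aestronglyMeasurable
  have hDmean : ∀ j, 𝔼[D j] = 0 := by
    intro j
    rw [hDdef]
    rw [integral_finset_sum _ (fun b _ => ((hterm2 j b).integrable one_le_two))]
    refine Finset.sum_eq_zero fun b _ => ?_
    rw [hμw_fact j b, hμmean j b, zero_mul]
  have hEmean : 𝔼[E] = 0 := by
    rw [hEdef, integral_sub (hε'L2.integrable one_le_two) (hεL2.integrable one_le_two),
      hεmean, hε'mean, sub_zero]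
  -- probabilities
  have hz_int : ∀ j b, 𝔼[z j b] = φ j b := fun j b => by
    rw [aux_integral01 (hzmeas j b) (hz01 j b), hzprob]
  have hz'_int : ∀ j b, 𝔼[z' j b] = φ' j b := fun j b => by
    rw [aux_integral01 (hz'meas j b) (hz'01 j b), hz'prob]
  have hzz'_int : ∀ j b, 𝔼[fun ω => z j b ω * z' j b ω] = φ j b * φ' j b := by
    intro j b
    have h := (hzz' j b b).integral_mul_eq_mul_integral (hzmeas j b).aestronglyMeasurable
      (hz'meas j b).aestronglyMeasurable
    rw [show (fun ω => z j b ω * z' j b ω) = z j b * z' j b from rfl, h,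
      hz_int, hz'_int]
  have hsumφ : ∀ j, (∑ b, φ j b) = 1 := by
    intro j
    have h1 : 𝔼[fun ω => ∑ b, z j b ω] = 1 := by
      rw [integral_congr_ae (hzsum j)]; simp
    rw [integral_finset_sum _
      (fun b _ => (aux_memℒp01 (hzmeas j b) (hz01 j b)).integrable one_le_two)] at h1
    simpa [hz_int] using h1
  have hsumφ' : ∀ j, (∑ b, φ' j b) = 1 := by
    intro j
    have h1 : 𝔼[fun ω => ∑ b, z' j b ω] = 1 := by
      rw [integral_congr_ae (hz'sum j)]; simp
    rw [integral_finset_sum _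
      (fun b _ => (aux_memℒp01 (hz'meas j b) (hz'01 j b)).integrable one_le_two)] at h1
    simpa [hz'_int] using h1
  -- second moments per tree
  have hDsq : ∀ j, 𝔼[fun ω => D j ω ^ 2] = 2 * τ ^ 2 * (1 - ∑ b, φ j b * φ' j b) := by
    intro j
    have hpt : (fun ω => D j ω ^ 2) = fun ω => ∑ b, ∑ d,
        (μ j b ω * (z' j b ω - z j b ω)) * (μ j d ω * (z' j d ω - z j d ω)) := by
      funext ω
      simp only [hDdef]
      rw [sq, Finset.sum_mul_sum]
    have hint : ∀ (b d : Fin (B j)), Integrable (fun ω =>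
        (μ j b ω * (z' j b ω - z j b ω)) * (μ j d ω * (z' j d ω - z j d ω))) ℙ :=
      fun b d => aux_integrable_mul (hterm2 j b) (hterm2 j d)
    have hterm : ∀ (b d : Fin (B j)),
        𝔼[fun ω => (μ j b ω * (z' j b ω - z j b ω)) * (μ j d ω * (z' j d ω - z j d ω))]
        = 𝔼[fun ω => μ j b ω * μ j d ω]
          * 𝔼[fun ω => (z' j b ω - z j b ω) * (z' j d ω - z j d ω)] := by
      intro b d
      have hφm : Measurable (fun v : Fin (B j) → ℝ => v b * v d) :=
        (measurable_pi_apply b).mul (measurable_pi_apply d)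
      have hψm : Measurable (fun p : (Fin (B j) → ℝ) × (Fin (B j) → ℝ) =>
          (p.2 b - p.1 b) * (p.2 d - p.1 d)) :=
        (((measurable_pi_apply b).comp measurable_snd).sub
          ((measurable_pi_apply b).comp measurable_fst)).mul
        (((measurable_pi_apply d).comp measurable_snd).sub
          ((measurable_pi_apply d).comp measurable_fst))
      have h := ((hμ_zz' j).comp hφm hψm).integral_mul_eq_mul_integral
        ((hμL2 j b).aestronglyMeasurable.mul (hμL2 j d).aestronglyMeasurable)
        ((hwmeas j b).mul (hwmeas j d)).aestronglyMeasurable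
      calc 𝔼[fun ω => (μ j b ω * (z' j b ω - z j b ω)) * (μ j d ω * (z' j d ω - z j d ω))]
          = 𝔼[fun ω => (μ j b ω * μ j d ω)
              * ((z' j b ω - z j b ω) * (z' j d ω - z j d ω))] := by
            exact integral_congr_ae (ae_of_all _ fun ω => by ring)
        _ = _ := h
    have hoff : ∀ (b d : Fin (B j)), b ≠ d → 𝔼[fun ω => μ j b ω * μ j d ω] = 0 := by
      intro b d hbd
      have h := ((hμindep j).indepFun hbd).integral_mul_eq_mul_integral
        (hμL2 j b).aestronglyMeasurable (hμL2 j d).aestronglyMeasurable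
      calc 𝔼[fun ω => μ j b ω * μ j d ω] = 𝔼[μ j b] * 𝔼[μ j d] := h
        _ = 0 := by rw [hμmean, zero_mul]
    have hμsq : ∀ b, 𝔼[fun ω => μ j b ω * μ j b ω] = τ ^ 2 := by
      intro b
      have h := variance_eq_sub (hμL2 j b)
      rw [hμvar, hμmean] at h
      have h2 : 𝔼[fun ω => μ j b ω ^ 2] = τ ^ 2 := by simpa using h.symm
      calc 𝔼[fun ω => μ j b ω * μ j b ω] = 𝔼[fun ω => μ j b ω ^ 2] :=
            integral_congr_ae (ae_of_all _ fun ω => (pow_two (μ j b ω)).symm)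
        _ = τ ^ 2 := h2
    have hwsq : ∀ b, 𝔼[fun ω => (z' j b ω - z j b ω) * (z' j b ω - z j b ω)]
        = φ j b + φ' j b - 2 * (φ j b * φ' j b) := by
      intro b
      have hpt2 : (fun ω => (z' j b ω - z j b ω) * (z' j b ω - z j b ω))
          = fun ω => z j b ω + z' j b ω - 2 * (z j b ω * z' j b ω) := by
        funext ω
        rcases hz01 j b ω with h | h <;> rcases hz'01 j b ω with h' | h' <;>
          rw [h, h'] <;> ring
      have hIz : Integrable (z j b) ℙ :=
        (aux_memℒp01 (hzmeas j b) (hz01 j b)).integrable one_le_two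
      have hIz' : Integrable (z' j b) ℙ :=
        (aux_memℒp01 (hz'meas j b) (hz'01 j b)).integrable one_le_two
      have hInt1 : Integrable (fun ω => z j b ω + z' j b ω) ℙ := hIz.add hIz'
      have hInt2 : Integrable (fun ω => 2 * (z j b ω * z' j b ω)) ℙ :=
        (aux_integrable_mul (aux_memℒp01 (hzmeas j b) (hz01 j b))
          (aux_memℒp01 (hz'meas j b) (hz'01 j b))).const_mul 2
      rw [hpt2, integral_sub hInt1 hInt2, integral_add hIz hIz',
        integral_const_mul, hz_int, hz'_int, hzz'_int]
    rw [hpt, integral_finset_sum _ (fun b _ => integrable_finset_sum _ (fun d _ => hint b d))]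
    have hrow : ∀ b : Fin (B j), (∑ d, 𝔼[fun ω =>
        (μ j b ω * (z' j b ω - z j b ω)) * (μ j d ω * (z' j d ω - z j d ω))])
        = τ ^ 2 * (φ j b + φ' j b - 2 * (φ j b * φ' j b)) := by
      intro b
      have h2 := Finset.sum_eq_single (s := Finset.univ)
        (f := fun d => 𝔼[fun ω =>
          (μ j b ω * (z' j b ω - z j b ω)) * (μ j d ω * (z' j d ω - z j d ω))]) b
        (fun d _ hdb => (hterm b d).trans
          (by rw [hoff b d (Ne.symm hdb), zero_mul]))
        (fun h => absurd (Finset.mem_univ b) h)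
      rw [h2]
      show 𝔼[fun ω => (μ j b ω * (z' j b ω - z j b ω))
          * (μ j b ω * (z' j b ω - z j b ω))] = _
      rw [hterm b b, hμsq b, hwsq b]
    have hsum2 : (∑ b : Fin (B j), ∑ d : Fin (B j), ∫ a, (fun ω =>
        (μ j b ω * (z' j b ω - z j b ω)) * (μ j d ω * (z' j d ω - z j d ω))) a)
        = ∑ b, τ ^ 2 * (φ j b + φ' j b - 2 * (φ j b * φ' j b)) :=
      Finset.sum_congr rfl fun b _ => hrow b
    have hfinal : (∑ b, τ ^ 2 * (φ j b + φ' j b - 2 * (φ j b * φ' j b)))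
        = 2 * τ ^ 2 * (1 - ∑ b, φ j b * φ' j b) := by
      rw [← Finset.mul_sum, Finset.sum_sub_distrib, Finset.sum_add_distrib,
        hsumφ j, hsumφ' j, ← Finset.mul_sum]
      ring
    have hstep : (∑ b : Fin (B j), ∫ a, ∑ d : Fin (B j),
        (μ j b a * (z' j b a - z j b a)) * (μ j d a * (z' j d a - z j d a)))
        = ∑ b : Fin (B j), ∑ d : Fin (B j), ∫ a, (fun ω =>
        (μ j b ω * (z' j b ω - z j b ω)) * (μ j d ω * (z' j d ω - z j d ω))) a :=
      Finset.sum_congr rfl fun b _ => integral_finset_sum _ fun d _ => hint b d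
    exact hstep.trans (hsum2.trans hfinal)
  have hEsq : 𝔼[fun ω => E ω ^ 2] = 2 * σ ^ 2 := by
    have hpt : (fun ω => E ω ^ 2)
        = fun ω => ε' ω ^ 2 + ε ω ^ 2 - 2 * (ε ω * ε' ω) := by
      funext ω; rw [hEdef]; ring
    have hεε' : 𝔼[fun ω => ε ω * ε' ω] = 0 := by
      have := hεcov; rw [hεmean, hε'mean] at this; simpa using this
    have hεsq : 𝔼[fun ω => ε ω ^ 2] = σ ^ 2 := by
      have := variance_eq_sub hεL2
      rw [hεvar, hεmean] at this; simpa using this.symm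
    have hε'sq : 𝔼[fun ω => ε' ω ^ 2] = σ ^ 2 := by
      have := variance_eq_sub hε'L2
      rw [hε'var, hε'mean] at this; simpa using this.symm
    have hInt1 : Integrable (fun ω => ε' ω ^ 2 + ε ω ^ 2) ℙ :=
      hε'L2.integrable_sq.add hεL2.integrable_sq
    have hInt2 : Integrable (fun ω => 2 * (ε ω * ε' ω)) ℙ :=
      (aux_integrable_mul hεL2 hε'L2).const_mul 2
    have hInt3 : Integrable (fun ω => ε' ω ^ 2) ℙ := hε'L2.integrable_sq
    have hInt4 : Integrable (fun ω => ε ω ^ 2) ℙ := hεL2.integrable_sq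
    rw [hpt, integral_sub hInt1 hInt2, integral_add hInt3 hInt4,
      integral_const_mul, hεε', hεsq, hε'sq]
    ring
  -- cross terms vanish
  set X : Option (Fin m) → Ω → ℝ := fun i => Option.elim i E D with hXdef
  have hX2 : ∀ i, MemLp (X i) 2 ℙ := by
    rintro (_ | j)
    · exact hE2
    · exact hD2 j
  have hXmean : ∀ i, 𝔼[X i] = 0 := by
    rintro (_ | j)
    · exact hEmean
    · exact hDmean j
  have hcross : ∀ i k, i ≠ k → 𝔼[fun ω => X i ω * X k ω] = 0 := by
    intro i k hik
    have hpair := hmutual.indepFun hik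
    have h := hpair.comp (mixF_meas (m := m) (B := B) i) (mixF_meas (m := m) (B := B) k)
    have hXi : ∀ i, (mixF (m := m) (B := B) i) ∘ (mixBundle μ z z' ε ε' i) = X i := by
      rintro (_ | j) <;> rfl
    rw [hXi i, hXi k] at h
    have h2 := h.integral_mul_eq_mul_integral (hX2 i).aestronglyMeasurable (hX2 k).aestronglyMeasurable
    calc 𝔼[fun ω => X i ω * X k ω] = 𝔼[X i] * 𝔼[X k] := h2
      _ = 0 := by rw [hXmean i, hXmean k, mul_zero]
  -- assemble
  have key : (fun ω =>
        (((∑ j, ∑ b, μ j b ω * z' j b ω) + ε' ω)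
          - ((∑ j, ∑ b, μ j b ω * z j b ω) + ε ω)) ^ 2)
      = fun ω => (∑ i : Option (Fin m), X i ω) ^ 2 := by
    funext ω
    rw [Fintype.sum_option]
    congr 1
    rw [hXdef]
    simp only [Option.elim, hEdef, hDdef, mul_sub, Finset.sum_sub_distrib]
    ring
  have hsum_int : 𝔼[fun ω => (∑ i : Option (Fin m), X i ω) ^ 2]
      = ∑ i : Option (Fin m), ∑ k : Option (Fin m), 𝔼[fun ω => X i ω * X k ω] := by
    have hpt : (fun ω => (∑ i : Option (Fin m), X i ω) ^ 2)
        = fun ω => ∑ i : Option (Fin m), ∑ k : Option (Fin m), X i ω * X k ω := by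
      funext ω; rw [sq, Finset.sum_mul_sum]
    rw [hpt, integral_finset_sum _ (fun i _ => integrable_finset_sum _
      (fun k _ => aux_integrable_mul (hX2 i) (hX2 k)))]
    exact Finset.sum_congr rfl fun i _ =>
      integral_finset_sum _ fun k _ => aux_integrable_mul (hX2 i) (hX2 k)
  have hdiag : ∑ i : Option (Fin m), ∑ k : Option (Fin m), 𝔼[fun ω => X i ω * X k ω]
      = 2 * σ ^ 2 + ∑ j, (2 * τ ^ 2 * (1 - ∑ b, φ j b * φ' j b)) := by
    have h1 : ∀ i : Option (Fin m),
        (∑ k : Option (Fin m), 𝔼[fun ω => X i ω * X k ω]) = 𝔼[fun ω => X i ω ^ 2] := by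
      intro i
      have h2 := Finset.sum_eq_single (s := Finset.univ)
        (f := fun k => 𝔼[fun ω => X i ω * X k ω]) i
        (fun k _ hk => hcross i k (Ne.symm hk))
        (fun h => absurd (Finset.mem_univ i) h)
      rw [h2]
      exact integral_congr_ae (ae_of_all _ fun ω => (pow_two (X i ω)).symm)
    simp only [h1]
    rw [Fintype.sum_option,
      show (∫ a, X none a ^ 2) = 2 * σ ^ 2 from hEsq,
      show (∑ i : Fin m, ∫ a, X (some i) a ^ 2)
          = ∑ j, (2 * τ ^ 2 * (1 - ∑ b, φ j b * φ' j b)) from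
        Finset.sum_congr rfl fun j _ => hDsq j]
  rw [key, hsum_int, hdiag]
  have hsplit : ∑ j, (2 * τ ^ 2 * (1 - ∑ b, φ j b * φ' j b))
      = 2 * τ ^ 2 * (m - ∑ j, ∑ b, φ j b * φ' j b) := by
    rw [← Finset.mul_sum, Finset.sum_sub_distrib, Finset.sum_const, Finset.card_univ,
      Fintype.card_fin, nsmul_eq_mul, mul_one]
  rw [hsplit]
  field_simp
end

section
/- (1/2)·Var(Y − Y′) = σ² + (τ_w² + 1/K²)·Σ_{l=1}^K (V_l − ρ_l) + τ_w²·(1 − Φ̄)·Σ_{l=1}^K (ρ_l + f̄_l²), i.e., the semivariogram of the model-mixing response conditional on the trees and bandwidths decomposes into the noise variance, the emulator semivariogram components ν_l^{(f)} = V_l − ρ_l scaled by (τ_w² + 1/K²), and the weight semivariogram component τ_w²·(1 − Φ̄) scaled by Σ_l (ρ_l + f̄_l²) (Theorem: conditional semivariogram for model mixing). -/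
open MeasureTheory ProbabilityTheory

open scoped ENNReal

lemma iIndepFun_ae_eq' {Ω ι : Type*} [Countable ι] {β : ι → Type*} [MeasurableSpace Ω]
    {μ : Measure Ω} (m : ∀ i, MeasurableSpace (β i)) {f f' : ∀ i, Ω → β i}
    (h : iIndepFun (m := m) f μ) (hff' : ∀ i, f i =ᵐ[μ] f' i) : iIndepFun (m := m) f' μ := by
  rw [iIndepFun_iff_measure_inter_preimage_eq_mul] at h ⊢
  intro S sets hsets
  have key : ∀ᵐ ω ∂μ, ∀ i, f i ω = f' i ω := ae_all_iff.2 hff'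
  have h2 : (⋂ i ∈ S, f' i ⁻¹' sets i) =ᵐ[μ] (⋂ i ∈ S, f i ⁻¹' sets i) := by
    rw [Filter.eventuallyEq_set]
    filter_upwards [key] with ω hω
    simp only [Set.mem_iInter, Set.mem_preimage]
    constructor
    · intro hmem i hi; rw [hω i]; exact hmem i hi
    · intro hmem i hi; rw [← hω i]; exact hmem i hi
  rw [measure_congr h2, h S hsets]
  refine Finset.prod_congr rfl fun i _ => measure_congr ?_
  rw [Filter.eventuallyEq_set]
  filter_upwards [hff' i] with ω hω
  simp only [Set.mem_preimage, hω]

lemma variance_ae_congr {Ω : Type*} [MeasureSpace Ω] [IsProbabilityMeasure (ℙ : Measure Ω)]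
    {f g : Ω → ℝ} (hfg : f =ᵐ[ℙ] g) (hg : MemLp g 2 ℙ) :
    variance f ℙ = variance g ℙ := by
  rw [variance_eq_sub (hg.ae_eq hfg.symm), variance_eq_sub hg]
  congr 1
  · exact integral_congr_ae (by filter_upwards [hfg] with ω h; simp [Pi.pow_apply, h])
  · rw [integral_congr_ae hfg]

lemma L2_mul_integrable {Ω : Type*} [MeasureSpace Ω]
    {f g : Ω → ℝ} (hf : MemLp f 2 ℙ) (hg : MemLp g 2 ℙ) :
    Integrable (fun ω => f ω * g ω) ℙ := by
  have h : (1 : ℝ≥0∞) / 1 = 1 / 2 + 1 / 2 := by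
    rw [ENNReal.div_add_div_same, one_div_one, one_add_one_eq_two]
    exact (ENNReal.div_self two_ne_zero ENNReal.ofNat_ne_top).symm
  exact memLp_one_iff_integrable.1 (hg.smul (r := 1) (hpqr := ⟨by simpa [one_div] using h.symm⟩) hf)

lemma indep_mul_memL2 {Ω : Type*} [MeasureSpace Ω] [IsProbabilityMeasure (ℙ : Measure Ω)]
    {f g : Ω → ℝ} (h : IndepFun f g ℙ) (hf : MemLp f 2 ℙ) (hg : MemLp g 2 ℙ) :
    MemLp (fun ω => f ω * g ω) 2 ℙ := by
  refine (memLp_two_iff_integrable_sq (hf.aestronglyMeasurable.mul hg.aestronglyMeasurable)).2 ?_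
  have h2 : IndepFun (fun ω => f ω ^ 2) (fun ω => g ω ^ 2) ℙ :=
    h.comp (measurable_id.pow_const 2) (measurable_id.pow_const 2)
  have hint := h2.integrable_mul hf.integrable_sq hg.integrable_sq
  refine hint.congr (Filter.Eventually.of_forall fun ω => ?_)
  simp [Pi.mul_apply, mul_pow]

lemma model_mixing_aux
    {Ω : Type*} [MeasureSpace Ω] [IsProbabilityMeasure (ℙ : Measure Ω)]
    (K : ℕ) (σ τw2 Φbar : ℝ)
    (fbar V ρ : Fin K → ℝ)
    (W W' F F' : Fin K → Ω → ℝ) (ε ε' : Ω → ℝ)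
    (hWm : ∀ l, Measurable (W l)) (hW'm : ∀ l, Measurable (W' l))
    (hFm : ∀ l, Measurable (F l)) (hF'm : ∀ l, Measurable (F' l))
    (hεm : Measurable ε) (hε'm : Measurable ε')
    (hWL2 : ∀ l, MemLp (W l) 2 ℙ) (hW'L2 : ∀ l, MemLp (W' l) 2 ℙ)
    (hFL2 : ∀ l, MemLp (F l) 2 ℙ) (hF'L2 : ∀ l, MemLp (F' l) 2 ℙ)
    (hεL2 : MemLp ε 2 ℙ) (hε'L2 : MemLp ε' 2 ℙ)
    (hmutual : iIndepFun
      (fun i : Fin K ⊕ (Fin K ⊕ Unit) =>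
        Sum.elim (fun l => fun ω => (W l ω, W' l ω))
          (Sum.elim (fun l => fun ω => (F l ω, F' l ω))
            (fun _ => fun ω => (ε ω, ε' ω))) i) ℙ)
    (hWmean : ∀ l, 𝔼[W l] = 1 / (K : ℝ)) (hW'mean : ∀ l, 𝔼[W' l] = 1 / (K : ℝ))
    (hWvar : ∀ l, variance (W l) ℙ = τw2) (hW'var : ∀ l, variance (W' l) ℙ = τw2)
    (hWcov : ∀ l, 𝔼[fun ω => W l ω * W' l ω] - 𝔼[W l] * 𝔼[W' l] = τw2 * Φbar)
    (hFmean : ∀ l, 𝔼[F l] = fbar l) (hF'mean : ∀ l, 𝔼[F' l] = fbar l)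
    (hFvar : ∀ l, variance (F l) ℙ = V l) (hF'var : ∀ l, variance (F' l) ℙ = V l)
    (hFcov : ∀ l, 𝔼[fun ω => F l ω * F' l ω] - 𝔼[F l] * 𝔼[F' l] = ρ l)
    (hεmean : 𝔼[ε] = 0) (hε'mean : 𝔼[ε'] = 0)
    (hεvar : variance ε ℙ = σ ^ 2) (hε'var : variance ε' ℙ = σ ^ 2)
    (hεcov : 𝔼[fun ω => ε ω * ε' ω] - 𝔼[ε] * 𝔼[ε'] = 0) :
    MemLp (fun ω =>
        ((∑ l, W l ω * F l ω) + ε ω) - ((∑ l, W' l ω * F' l ω) + ε' ω)) 2 ℙ ∧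
    (1 / 2) * variance (fun ω =>
        ((∑ l, W l ω * F l ω) + ε ω) - ((∑ l, W' l ω * F' l ω) + ε' ω)) ℙ
      = σ ^ 2 + (τw2 + 1 / (K : ℝ) ^ 2) * (∑ l, (V l - ρ l))
        + τw2 * (1 - Φbar) * (∑ l, (ρ l + (fbar l) ^ 2)) := by
  classical
  -- measurability of the blocks
  have hXmeas : ∀ i : Fin K ⊕ (Fin K ⊕ Unit), Measurable
      ((fun i : Fin K ⊕ (Fin K ⊕ Unit) =>
        Sum.elim (fun l => fun ω => (W l ω, W' l ω))
          (Sum.elim (fun l => fun ω => (F l ω, F' l ω))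
            (fun _ => fun ω => (ε ω, ε' ω))) i) i) := by
    rintro (l | l | _)
    · exact (hWm l).prodMk (hW'm l)
    · exact (hFm l).prodMk (hF'm l)
    · exact hεm.prodMk hε'm
  -- intra-block independence
  have hblock : ∀ l : Fin K,
      IndepFun (fun ω => (W l ω, W' l ω)) (fun ω => (F l ω, F' l ω)) ℙ := fun l =>
    hmutual.indepFun (show (Sum.inl l : Fin K ⊕ (Fin K ⊕ Unit)) ≠ Sum.inr (Sum.inl l) from
      Sum.inl_ne_inr)
  have hiWF : ∀ l, IndepFun (W l) (F l) ℙ := fun l =>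
    (hblock l).comp measurable_fst measurable_fst
  have hiW2F2 : ∀ l, IndepFun (fun ω => W l ω ^ 2) (fun ω => F l ω ^ 2) ℙ := fun l =>
    (hblock l).comp (measurable_fst.pow_const 2) (measurable_fst.pow_const 2)
  have hiW'F' : ∀ l, IndepFun (W' l) (F' l) ℙ := fun l =>
    (hblock l).comp measurable_snd measurable_snd
  have hiW'2F'2 : ∀ l, IndepFun (fun ω => W' l ω ^ 2) (fun ω => F' l ω ^ 2) ℙ := fun l =>
    (hblock l).comp (measurable_snd.pow_const 2) (measurable_snd.pow_const 2)
  have hiWW'FF' : ∀ l, IndepFun (fun ω => W l ω * W' l ω) (fun ω => F l ω * F' l ω) ℙ :=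
    fun l => (hblock l).comp (measurable_fst.mul measurable_snd)
      (measurable_fst.mul measurable_snd)
  -- second moments
  have EW2 : ∀ l, 𝔼[fun ω => W l ω ^ 2] = τw2 + (1 / (K : ℝ)) ^ 2 := by
    intro l
    have h1 := variance_eq_sub (hWL2 l)
    rw [hWvar l, hWmean l] at h1
    have h2 : 𝔼[fun ω => W l ω ^ 2] = 𝔼[(W l) ^ 2] := rfl
    rw [h2]; linarith
  have EW'2 : ∀ l, 𝔼[fun ω => W' l ω ^ 2] = τw2 + (1 / (K : ℝ)) ^ 2 := by
    intro l
    have h1 := variance_eq_sub (hW'L2 l)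
    rw [hW'var l, hW'mean l] at h1
    have h2 : 𝔼[fun ω => W' l ω ^ 2] = 𝔼[(W' l) ^ 2] := rfl
    rw [h2]; linarith
  have EF2 : ∀ l, 𝔼[fun ω => F l ω ^ 2] = V l + fbar l ^ 2 := by
    intro l
    have h1 := variance_eq_sub (hFL2 l)
    rw [hFvar l, hFmean l] at h1
    have h2 : 𝔼[fun ω => F l ω ^ 2] = 𝔼[(F l) ^ 2] := rfl
    rw [h2]; linarith
  have EF'2 : ∀ l, 𝔼[fun ω => F' l ω ^ 2] = V l + fbar l ^ 2 := by
    intro l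
    have h1 := variance_eq_sub (hF'L2 l)
    rw [hF'var l, hF'mean l] at h1
    have h2 : 𝔼[fun ω => F' l ω ^ 2] = 𝔼[(F' l) ^ 2] := rfl
    rw [h2]; linarith
  have Eε2 : 𝔼[fun ω => ε ω ^ 2] = σ ^ 2 := by
    have h1 := variance_eq_sub hεL2
    rw [hεvar, hεmean] at h1
    have h2 : 𝔼[fun ω => ε ω ^ 2] = 𝔼[ε ^ 2] := rfl
    rw [h2]; linarith
  have Eε'2 : 𝔼[fun ω => ε' ω ^ 2] = σ ^ 2 := by
    have h1 := variance_eq_sub hε'L2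
    rw [hε'var, hε'mean] at h1
    have h2 : 𝔼[fun ω => ε' ω ^ 2] = 𝔼[ε' ^ 2] := rfl
    rw [h2]; linarith
  -- cross moments within blocks
  have EWW' : ∀ l, 𝔼[fun ω => W l ω * W' l ω]
      = τw2 * Φbar + (1 / (K : ℝ)) * (1 / (K : ℝ)) := by
    intro l
    have h1 := hWcov l
    rw [hWmean l, hW'mean l] at h1
    linarith
  have EFF' : ∀ l, 𝔼[fun ω => F l ω * F' l ω] = ρ l + fbar l * fbar l := by
    intro l
    have h1 := hFcov l
    rw [hFmean l, hF'mean l] at h1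
    linarith
  have Eεε' : 𝔼[fun ω => ε ω * ε' ω] = 0 := by
    have h1 := hεcov
    rw [hεmean, hε'mean] at h1
    linarith
  -- integrability of products
  have intWF : ∀ l, Integrable (fun ω => W l ω * F l ω) ℙ := fun l =>
    (hiWF l).integrable_mul ((hWL2 l).integrable one_le_two) ((hFL2 l).integrable one_le_two)
  have intW'F' : ∀ l, Integrable (fun ω => W' l ω * F' l ω) ℙ := fun l =>
    (hiW'F' l).integrable_mul ((hW'L2 l).integrable one_le_two) ((hF'L2 l).integrable one_le_two)
  have intWW' : ∀ l, Integrable (fun ω => W l ω * W' l ω) ℙ := fun l =>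
    L2_mul_integrable (hWL2 l) (hW'L2 l)
  have intFF' : ∀ l, Integrable (fun ω => F l ω * F' l ω) ℙ := fun l =>
    L2_mul_integrable (hFL2 l) (hF'L2 l)
  have intW2F2 : ∀ l, Integrable (fun ω => W l ω ^ 2 * F l ω ^ 2) ℙ := fun l =>
    (hiW2F2 l).integrable_mul (hWL2 l).integrable_sq (hFL2 l).integrable_sq
  have intW'2F'2 : ∀ l, Integrable (fun ω => W' l ω ^ 2 * F' l ω ^ 2) ℙ := fun l =>
    (hiW'2F'2 l).integrable_mul (hW'L2 l).integrable_sq (hF'L2 l).integrable_sq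
  have intWW'FF' : ∀ l, Integrable (fun ω => (W l ω * W' l ω) * (F l ω * F' l ω)) ℙ := fun l =>
    (hiWW'FF' l).integrable_mul (intWW' l) (intFF' l)
  -- first moments of products
  have EWF : ∀ l, 𝔼[fun ω => W l ω * F l ω] = (1 / (K : ℝ)) * fbar l := by
    intro l
    have h := (hiWF l).integral_fun_mul_eq_mul_integral
      ((hWL2 l).integrable one_le_two).aestronglyMeasurable ((hFL2 l).integrable one_le_two).aestronglyMeasurable
    rw [hWmean l, hFmean l] at h
    exact h
  have EW'F' : ∀ l, 𝔼[fun ω => W' l ω * F' l ω] = (1 / (K : ℝ)) * fbar l := by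
    intro l
    have h := (hiW'F' l).integral_fun_mul_eq_mul_integral
      ((hW'L2 l).integrable one_le_two).aestronglyMeasurable ((hF'L2 l).integrable one_le_two).aestronglyMeasurable
    rw [hW'mean l, hF'mean l] at h
    exact h
  -- second moments of products
  have EWF2 : ∀ l, 𝔼[fun ω => W l ω ^ 2 * F l ω ^ 2]
      = (τw2 + (1 / (K : ℝ)) ^ 2) * (V l + fbar l ^ 2) := by
    intro l
    have h := (hiW2F2 l).integral_fun_mul_eq_mul_integral (hWL2 l).integrable_sq.aestronglyMeasurable (hFL2 l).integrable_sq.aestronglyMeasurable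
    rw [EW2 l, EF2 l] at h
    exact h
  have EW'F'2 : ∀ l, 𝔼[fun ω => W' l ω ^ 2 * F' l ω ^ 2]
      = (τw2 + (1 / (K : ℝ)) ^ 2) * (V l + fbar l ^ 2) := by
    intro l
    have h := (hiW'2F'2 l).integral_fun_mul_eq_mul_integral
      (hW'L2 l).integrable_sq.aestronglyMeasurable (hF'L2 l).integrable_sq.aestronglyMeasurable
    rw [EW'2 l, EF'2 l] at h
    exact h
  have Ecross : ∀ l, 𝔼[fun ω => (W l ω * W' l ω) * (F l ω * F' l ω)]
      = (τw2 * Φbar + (1 / (K : ℝ)) * (1 / (K : ℝ))) * (ρ l + fbar l * fbar l) := by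
    intro l
    have h := (hiWW'FF' l).integral_fun_mul_eq_mul_integral (intWW' l).aestronglyMeasurable (intFF' l).aestronglyMeasurable
    rw [EWW' l, EFF' l] at h
    exact h
  -- the summand family
  set A : Fin K ⊕ Unit → Ω → ℝ :=
    Sum.elim (fun l ω => W l ω * F l ω - W' l ω * F' l ω) (fun _ ω => ε ω - ε' ω) with hA
  have hprodL2 : ∀ l, MemLp (fun ω => W l ω * F l ω) 2 ℙ := fun l =>
    indep_mul_memL2 (hiWF l) (hWL2 l) (hFL2 l)
  have hprodL2' : ∀ l, MemLp (fun ω => W' l ω * F' l ω) 2 ℙ := fun l =>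
    indep_mul_memL2 (hiW'F' l) (hW'L2 l) (hF'L2 l)
  have hAL2 : ∀ i : Fin K ⊕ Unit, MemLp (A i) 2 ℙ := by
    rintro (l | _)
    · exact (hprodL2 l).sub (hprodL2' l)
    · exact hεL2.sub hε'L2
  -- pairwise independence of the summands
  have hApair : ∀ i j : Fin K ⊕ Unit, i ≠ j → IndepFun (A i) (A j) ℙ := by
    have φmeas : Measurable (fun p : (ℝ × ℝ) × (ℝ × ℝ) => p.1.1 * p.2.1 - p.1.2 * p.2.2) :=
      (measurable_fst.fst.mul measurable_snd.fst).sub (measurable_fst.snd.mul measurable_snd.snd)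
    have hp2 : ∀ l m : Fin K, l ≠ m → IndepFun (A (Sum.inl l)) (A (Sum.inl m)) ℙ := by
      intro l m hlm
      have h := hmutual.indepFun_prodMk_prodMk hXmeas
        (Sum.inl l) (Sum.inr (Sum.inl l)) (Sum.inl m) (Sum.inr (Sum.inl m))
        (by simp [hlm]) Sum.inl_ne_inr Sum.inr_ne_inl (by simp [hlm])
      exact h.comp φmeas φmeas
    have hp1 : ∀ l : Fin K, IndepFun (A (Sum.inl l)) (A (Sum.inr ())) ℙ := by
      intro l
      have h := hmutual.indepFun_prodMk hXmeas
        (Sum.inl l) (Sum.inr (Sum.inl l)) (Sum.inr (Sum.inr ()))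
        Sum.inl_ne_inr (by simp)
      exact h.comp φmeas (measurable_fst.sub measurable_snd)
    rintro (l | ⟨⟩) (m | ⟨⟩) hij
    · exact hp2 l m (by simpa using hij)
    · exact hp1 l
    · exact (hp1 m).symm
    · exact absurd rfl hij
  -- mean of each summand
  have hEA : ∀ l, 𝔼[A (Sum.inl l)] = 0 := by
    intro l
    have h : 𝔼[A (Sum.inl l)] = 𝔼[fun ω => W l ω * F l ω] - 𝔼[fun ω => W' l ω * F' l ω] :=
      integral_sub (intWF l) (intW'F' l)
    rw [h, EWF l, EW'F' l, sub_self]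
  have hEB : 𝔼[A (Sum.inr ())] = 0 := by
    have h : 𝔼[A (Sum.inr ())] = 𝔼[ε] - 𝔼[ε'] :=
      integral_sub (hεL2.integrable one_le_two) (hε'L2.integrable one_le_two)
    rw [h, hεmean, hε'mean, sub_self]
  -- variance of each summand
  have hvarA : ∀ l, variance (A (Sum.inl l)) ℙ
      = 2 * ((τw2 + (1 / (K : ℝ)) ^ 2) * (V l + fbar l ^ 2))
        - 2 * ((τw2 * Φbar + (1 / (K : ℝ)) * (1 / (K : ℝ))) * (ρ l + fbar l * fbar l)) := by
    intro l
    rw [variance_eq_sub (hAL2 (Sum.inl l)), hEA l]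
    have hsq : (A (Sum.inl l)) ^ 2 = fun ω =>
        (W l ω ^ 2 * F l ω ^ 2 + W' l ω ^ 2 * F' l ω ^ 2)
          - 2 * ((W l ω * W' l ω) * (F l ω * F' l ω)) := by
      funext ω
      simp only [hA, Pi.pow_apply, Sum.elim_inl]
      ring
    rw [hsq]
    have h1 : Integrable (fun ω => W l ω ^ 2 * F l ω ^ 2 + W' l ω ^ 2 * F' l ω ^ 2) ℙ :=
      (intW2F2 l).add (intW'2F'2 l)
    have h2 : Integrable (fun ω => 2 * ((W l ω * W' l ω) * (F l ω * F' l ω))) ℙ :=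
      (intWW'FF' l).const_mul 2
    rw [integral_sub h1 h2, integral_add (intW2F2 l) (intW'2F'2 l), integral_const_mul 2 _,
      EWF2 l, EW'F'2 l, Ecross l]
    ring
  have hvarB : variance (A (Sum.inr ())) ℙ = 2 * σ ^ 2 := by
    rw [variance_eq_sub (hAL2 (Sum.inr ())), hEB]
    have hsq : (A (Sum.inr ())) ^ 2 = fun ω =>
        (ε ω ^ 2 + ε' ω ^ 2) - 2 * (ε ω * ε' ω) := by
      funext ω
      simp only [hA, Pi.pow_apply, Sum.elim_inr]
      ring
    rw [hsq]
    have h1 : Integrable (fun ω => ε ω ^ 2 + ε' ω ^ 2) ℙ :=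
      hεL2.integrable_sq.add hε'L2.integrable_sq
    have h2 : Integrable (fun ω => 2 * (ε ω * ε' ω)) ℙ :=
      (L2_mul_integrable hεL2 hε'L2).const_mul 2
    rw [integral_sub h1 h2, integral_add hεL2.integrable_sq hε'L2.integrable_sq,
      integral_const_mul 2 _, Eε2, Eε'2, Eεε']
    ring
  -- the target decomposes as the sum of the summands
  have hDeq : (fun ω =>
      ((∑ l, W l ω * F l ω) + ε ω) - ((∑ l, W' l ω * F' l ω) + ε' ω))
      = ∑ i : Fin K ⊕ Unit, A i := by
    funext ω
    simp only [Finset.sum_apply, Fintype.sum_sum_type, hA, Sum.elim_inl, Sum.elim_inr,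
      Finset.univ_unique, Finset.sum_singleton]
    rw [Finset.sum_sub_distrib]
    ring
  constructor
  · rw [hDeq]
    exact memLp_finset_sum' _ (fun i _ => hAL2 i)
  · rw [hDeq, IndepFun.variance_sum (fun i _ => hAL2 i)
      (fun i _ j _ hij => hApair i j hij)]
    rw [Fintype.sum_sum_type]
    simp only [Finset.univ_unique, Finset.sum_singleton]
    rw [Finset.sum_congr rfl (fun l _ => hvarA l), hvarB]
    have key : ∀ l : Fin K, (1 / 2 : ℝ) *
        (2 * ((τw2 + (1 / (K : ℝ)) ^ 2) * (V l + fbar l ^ 2))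
          - 2 * ((τw2 * Φbar + (1 / (K : ℝ)) * (1 / (K : ℝ))) * (ρ l + fbar l * fbar l)))
        = (τw2 + 1 / (K : ℝ) ^ 2) * (V l - ρ l)
          + τw2 * (1 - Φbar) * (ρ l + fbar l ^ 2) := by
      intro l
      ring
    calc (1 / 2 : ℝ) * ((∑ l, (2 * ((τw2 + (1 / (K : ℝ)) ^ 2) * (V l + fbar l ^ 2))
          - 2 * ((τw2 * Φbar + (1 / (K : ℝ)) * (1 / (K : ℝ))) * (ρ l + fbar l * fbar l))))
          + 2 * σ ^ 2)
        = σ ^ 2 + ∑ l, (1 / 2 : ℝ) *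
            (2 * ((τw2 + (1 / (K : ℝ)) ^ 2) * (V l + fbar l ^ 2))
              - 2 * ((τw2 * Φbar + (1 / (K : ℝ)) * (1 / (K : ℝ)))
                * (ρ l + fbar l * fbar l))) := by
          rw [mul_add, Finset.mul_sum]; ring
      _ = σ ^ 2 + ∑ l, ((τw2 + 1 / (K : ℝ) ^ 2) * (V l - ρ l)
            + τw2 * (1 - Φbar) * (ρ l + fbar l ^ 2)) := by
          congr 1
          exact Finset.sum_congr rfl fun l _ => key l
      _ = σ ^ 2 + (τw2 + 1 / (K : ℝ) ^ 2) * (∑ l, (V l - ρ l))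
            + τw2 * (1 - Φbar) * (∑ l, (ρ l + (fbar l) ^ 2)) := by
          rw [Finset.sum_add_distrib, ← Finset.mul_sum, ← Finset.mul_sum]
          ring

/-- **Conditional semivariogram for model mixing.**
`(1/2)·Var(Y − Y′) = σ² + (τ_w² + 1/K²)·Σ_{l=1}^K (V_l − ρ_l)
  + τ_w²·(1 − Φ̄)·Σ_{l=1}^K (ρ_l + f̄_l²)`:
the semivariogram of the model-mixing response conditional on the trees and bandwidths
decomposes into the noise variance, the emulator semivariogram components
`ν_l^{(f)} = V_l − ρ_l` scaled by `(τ_w² + 1/K²)`, and the weight semivariogram component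
`τ_w²·(1 − Φ̄)` scaled by `Σ_l (ρ_l + f̄_l²)`. -/
theorem model_mixing_conditional_semivariogram
    {Ω : Type*} [MeasureSpace Ω] [IsProbabilityMeasure (ℙ : Measure Ω)]
    (K : ℕ) (hK : 1 ≤ K) (σ τw2 Φbar : ℝ)
    (hσ : 0 ≤ σ) (hτw2 : 0 ≤ τw2) (hΦbar0 : 0 ≤ Φbar) (hΦbar1 : Φbar ≤ 1)
    (fbar V ρ : Fin K → ℝ) (hV : ∀ l, 0 ≤ V l)
    (W W' F F' : Fin K → Ω → ℝ) (ε ε' : Ω → ℝ)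
    (hWL2 : ∀ l, MemLp (W l) 2 ℙ) (hW'L2 : ∀ l, MemLp (W' l) 2 ℙ)
    (hFL2 : ∀ l, MemLp (F l) 2 ℙ) (hF'L2 : ∀ l, MemLp (F' l) 2 ℙ)
    (hεL2 : MemLp ε 2 ℙ) (hε'L2 : MemLp ε' 2 ℙ)
    (hmutual : iIndepFun
      (fun i : Fin K ⊕ (Fin K ⊕ Unit) =>
        Sum.elim (fun l => fun ω => (W l ω, W' l ω))
          (Sum.elim (fun l => fun ω => (F l ω, F' l ω))
            (fun _ => fun ω => (ε ω, ε' ω))) i) ℙ)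
    (hWmean : ∀ l, 𝔼[W l] = 1 / (K : ℝ)) (hW'mean : ∀ l, 𝔼[W' l] = 1 / (K : ℝ))
    (hWvar : ∀ l, variance (W l) ℙ = τw2) (hW'var : ∀ l, variance (W' l) ℙ = τw2)
    (hWcov : ∀ l, 𝔼[fun ω => W l ω * W' l ω] - 𝔼[W l] * 𝔼[W' l] = τw2 * Φbar)
    (hFmean : ∀ l, 𝔼[F l] = fbar l) (hF'mean : ∀ l, 𝔼[F' l] = fbar l)
    (hFvar : ∀ l, variance (F l) ℙ = V l) (hF'var : ∀ l, variance (F' l) ℙ = V l)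
    (hFcov : ∀ l, 𝔼[fun ω => F l ω * F' l ω] - 𝔼[F l] * 𝔼[F' l] = ρ l)
    (hεmean : 𝔼[ε] = 0) (hε'mean : 𝔼[ε'] = 0)
    (hεvar : variance ε ℙ = σ ^ 2) (hε'var : variance ε' ℙ = σ ^ 2)
    (hεcov : 𝔼[fun ω => ε ω * ε' ω] - 𝔼[ε] * 𝔼[ε'] = 0) :
    (1 / 2) * variance (fun ω =>
        ((∑ l, W l ω * F l ω) + ε ω) - ((∑ l, W' l ω * F' l ω) + ε' ω)) ℙ
      = σ ^ 2 + (τw2 + 1 / (K : ℝ) ^ 2) * (∑ l, (V l - ρ l))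
        + τw2 * (1 - Φbar) * (∑ l, (ρ l + (fbar l) ^ 2)) := by
  classical
  -- replace the random variables by measurable representatives
  obtain ⟨Y, hYmeas, hYae⟩ :
      ∃ Y : (Fin K ⊕ (Fin K ⊕ Unit)) → Ω → ℝ × ℝ,
        (∀ i, Measurable (Y i)) ∧
        (∀ i, (Sum.elim (fun l => fun ω => (W l ω, W' l ω))
            (Sum.elim (fun l => fun ω => (F l ω, F' l ω))
              (fun _ => fun ω => (ε ω, ε' ω))) i) =ᵐ[ℙ] Y i) := by
    have hXae : ∀ i : Fin K ⊕ (Fin K ⊕ Unit),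
        AEMeasurable (Sum.elim (fun l => fun ω => (W l ω, W' l ω))
          (Sum.elim (fun l => fun ω => (F l ω, F' l ω))
            (fun _ => fun ω => (ε ω, ε' ω))) i) ℙ := by
      rintro (l | l | _)
      · exact ((hWL2 l).aestronglyMeasurable.aemeasurable.prodMk
          (hW'L2 l).aestronglyMeasurable.aemeasurable)
      · exact ((hFL2 l).aestronglyMeasurable.aemeasurable.prodMk
          (hF'L2 l).aestronglyMeasurable.aemeasurable)
      · exact (hεL2.aestronglyMeasurable.aemeasurable.prodMk
          hε'L2.aestronglyMeasurable.aemeasurable)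
    exact ⟨fun i => (hXae i).mk _, fun i => (hXae i).measurable_mk,
      fun i => (hXae i).ae_eq_mk⟩
  have hYindep : iIndepFun Y ℙ :=
    iIndepFun_ae_eq' _ hmutual hYae
  have hYindep' : iIndepFun
      (fun i : Fin K ⊕ (Fin K ⊕ Unit) =>
        Sum.elim (fun l => fun ω => ((Y (Sum.inl l) ω).1, (Y (Sum.inl l) ω).2))
          (Sum.elim
            (fun l => fun ω => ((Y (Sum.inr (Sum.inl l)) ω).1, (Y (Sum.inr (Sum.inl l)) ω).2))
            (fun _ => fun ω =>
              ((Y (Sum.inr (Sum.inr ())) ω).1, (Y (Sum.inr (Sum.inr ())) ω).2))) i) ℙ := by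
    have h : (fun i : Fin K ⊕ (Fin K ⊕ Unit) =>
        Sum.elim (fun l => fun ω => ((Y (Sum.inl l) ω).1, (Y (Sum.inl l) ω).2))
          (Sum.elim
            (fun l => fun ω => ((Y (Sum.inr (Sum.inl l)) ω).1, (Y (Sum.inr (Sum.inl l)) ω).2))
            (fun _ => fun ω =>
              ((Y (Sum.inr (Sum.inr ())) ω).1, (Y (Sum.inr (Sum.inr ())) ω).2))) i) = Y := by
      funext i
      rcases i with l | l | ⟨⟩ <;> rfl
    rw [h]
    exact hYindep
  -- component ae equalities
  have haew : ∀ l, W l =ᵐ[ℙ] fun ω => (Y (Sum.inl l) ω).1 := fun l => by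
    filter_upwards [hYae (Sum.inl l)] with ω h
    exact congrArg Prod.fst h
  have haew' : ∀ l, W' l =ᵐ[ℙ] fun ω => (Y (Sum.inl l) ω).2 := fun l => by
    filter_upwards [hYae (Sum.inl l)] with ω h
    exact congrArg Prod.snd h
  have haef : ∀ l, F l =ᵐ[ℙ] fun ω => (Y (Sum.inr (Sum.inl l)) ω).1 := fun l => by
    filter_upwards [hYae (Sum.inr (Sum.inl l))] with ω h
    exact congrArg Prod.fst h
  have haef' : ∀ l, F' l =ᵐ[ℙ] fun ω => (Y (Sum.inr (Sum.inl l)) ω).2 := fun l => by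
    filter_upwards [hYae (Sum.inr (Sum.inl l))] with ω h
    exact congrArg Prod.snd h
  have haee : ε =ᵐ[ℙ] fun ω => (Y (Sum.inr (Sum.inr ())) ω).1 := by
    filter_upwards [hYae (Sum.inr (Sum.inr ()))] with ω h
    exact congrArg Prod.fst h
  have haee' : ε' =ᵐ[ℙ] fun ω => (Y (Sum.inr (Sum.inr ())) ω).2 := by
    filter_upwards [hYae (Sum.inr (Sum.inr ()))] with ω h
    exact congrArg Prod.snd h
  -- L² of representatives
  have hwL2 : ∀ l, MemLp (fun ω => (Y (Sum.inl l) ω).1) 2 ℙ := fun l =>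
    (hWL2 l).ae_eq (haew l)
  have hw'L2 : ∀ l, MemLp (fun ω => (Y (Sum.inl l) ω).2) 2 ℙ := fun l =>
    (hW'L2 l).ae_eq (haew' l)
  have hfL2 : ∀ l, MemLp (fun ω => (Y (Sum.inr (Sum.inl l)) ω).1) 2 ℙ := fun l =>
    (hFL2 l).ae_eq (haef l)
  have hf'L2 : ∀ l, MemLp (fun ω => (Y (Sum.inr (Sum.inl l)) ω).2) 2 ℙ := fun l =>
    (hF'L2 l).ae_eq (haef' l)
  have heL2 : MemLp (fun ω => (Y (Sum.inr (Sum.inr ())) ω).1) 2 ℙ := hεL2.ae_eq haee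
  have he'L2 : MemLp (fun ω => (Y (Sum.inr (Sum.inr ())) ω).2) 2 ℙ := hε'L2.ae_eq haee'
  -- apply the auxiliary lemma to the representatives
  obtain ⟨hDL2, hDvar⟩ := model_mixing_aux K σ τw2 Φbar fbar V ρ
    (fun l ω => (Y (Sum.inl l) ω).1) (fun l ω => (Y (Sum.inl l) ω).2)
    (fun l ω => (Y (Sum.inr (Sum.inl l)) ω).1) (fun l ω => (Y (Sum.inr (Sum.inl l)) ω).2)
    (fun ω => (Y (Sum.inr (Sum.inr ())) ω).1) (fun ω => (Y (Sum.inr (Sum.inr ())) ω).2)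
    (fun l => (hYmeas (Sum.inl l)).fst) (fun l => (hYmeas (Sum.inl l)).snd)
    (fun l => (hYmeas (Sum.inr (Sum.inl l))).fst) (fun l => (hYmeas (Sum.inr (Sum.inl l))).snd)
    (hYmeas (Sum.inr (Sum.inr ()))).fst (hYmeas (Sum.inr (Sum.inr ()))).snd
    hwL2 hw'L2 hfL2 hf'L2 heL2 he'L2
    hYindep'
    (fun l => by rw [← integral_congr_ae (haew l)]; exact hWmean l)
    (fun l => by rw [← integral_congr_ae (haew' l)]; exact hW'mean l)
    (fun l => by rw [← variance_ae_congr (haew l) (hwL2 l)]; exact hWvar l)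
    (fun l => by rw [← variance_ae_congr (haew' l) (hw'L2 l)]; exact hW'var l)
    (fun l => by
      have hcross : (fun ω => (Y (Sum.inl l) ω).1 * (Y (Sum.inl l) ω).2) =ᵐ[ℙ]
          (fun ω => W l ω * W' l ω) := by
        filter_upwards [haew l, haew' l] with ω h h'
        rw [← h, ← h']
      rw [integral_congr_ae hcross, ← integral_congr_ae (haew l),
        ← integral_congr_ae (haew' l)]
      exact hWcov l)
    (fun l => by rw [← integral_congr_ae (haef l)]; exact hFmean l)
    (fun l => by rw [← integral_congr_ae (haef' l)]; exact hF'mean l)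
    (fun l => by rw [← variance_ae_congr (haef l) (hfL2 l)]; exact hFvar l)
    (fun l => by rw [← variance_ae_congr (haef' l) (hf'L2 l)]; exact hF'var l)
    (fun l => by
      have hcross : (fun ω => (Y (Sum.inr (Sum.inl l)) ω).1 * (Y (Sum.inr (Sum.inl l)) ω).2)
          =ᵐ[ℙ] (fun ω => F l ω * F' l ω) := by
        filter_upwards [haef l, haef' l] with ω h h'
        rw [← h, ← h']
      rw [integral_congr_ae hcross, ← integral_congr_ae (haef l),
        ← integral_congr_ae (haef' l)]
      exact hFcov l)
    (by rw [← integral_congr_ae haee]; exact hεmean)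
    (by rw [← integral_congr_ae haee']; exact hε'mean)
    (by rw [← variance_ae_congr haee heL2]; exact hεvar)
    (by rw [← variance_ae_congr haee' he'L2]; exact hε'var)
    (by
      have hcross : (fun ω => (Y (Sum.inr (Sum.inr ())) ω).1 * (Y (Sum.inr (Sum.inr ())) ω).2)
          =ᵐ[ℙ] (fun ω => ε ω * ε' ω) := by
        filter_upwards [haee, haee'] with ω h h'
        rw [← h, ← h']
      rw [integral_congr_ae hcross, ← integral_congr_ae haee, ← integral_congr_ae haee']
      exact hεcov)
  -- transfer the conclusion back
  have hDae : (fun ω =>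
      ((∑ l, W l ω * F l ω) + ε ω) - ((∑ l, W' l ω * F' l ω) + ε' ω)) =ᵐ[ℙ]
      (fun ω =>
        ((∑ l, (Y (Sum.inl l) ω).1 * (Y (Sum.inr (Sum.inl l)) ω).1)
            + (Y (Sum.inr (Sum.inr ())) ω).1)
          - ((∑ l, (Y (Sum.inl l) ω).2 * (Y (Sum.inr (Sum.inl l)) ω).2)
            + (Y (Sum.inr (Sum.inr ())) ω).2)) := by
    filter_upwards [ae_all_iff.2 haew, ae_all_iff.2 haew', ae_all_iff.2 haef,
      ae_all_iff.2 haef', haee, haee'] with ω h1 h2 h3 h4 h5 h6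
    have s1 : ∑ l, W l ω * F l ω
        = ∑ l, (Y (Sum.inl l) ω).1 * (Y (Sum.inr (Sum.inl l)) ω).1 :=
      Finset.sum_congr rfl fun l _ => by rw [h1 l, h3 l]
    have s2 : ∑ l, W' l ω * F' l ω
        = ∑ l, (Y (Sum.inl l) ω).2 * (Y (Sum.inr (Sum.inl l)) ω).2 :=
      Finset.sum_congr rfl fun l _ => by rw [h2 l, h4 l]
    rw [s1, s2, h5, h6]
  rw [variance_ae_congr hDae hDL2]
  exact hDvar
end

section
/- The penalized L₂ (sparsegen-linear) projection maps any weight vector onto the probability simplex: each u_l = max((w_l − λ_Q)/(1 − T), 0) satisfies u_l ≥ 0, and Σ_{l=1}^K u_l = 1. -/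
/-- **The penalized `L₂` (sparsegen-linear) projection lands on the probability simplex.**
Given `w ∈ ℝ^K` and a temperature `0 ≤ T < 1`, sort `w` in decreasing order via a
permutation `σ`, let `Q` be the largest index `t` (here `0`-based, so `t` stands for
`t+1` in `1`-based notation) with `1 − T + (t+1)·w_(t) > Σ_{l ≤ t} w_(l)`, and set
`λ_Q = (Σ_{k ≤ Q} w_(k) − 1 + T)/(Q+1)`.  Then the projected weights
`u_l = max((w_l − λ_Q)/(1 − T), 0)` satisfy `u_l ≥ 0` and `Σ_{l=1}^K u_l = 1`. -/
theorem sparsegen_linear_projection_mem_simplex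
    (K : ℕ) (hK : 1 ≤ K) (w : Fin K → ℝ) (T : ℝ) (hT0 : 0 ≤ T) (hT1 : T < 1)
    (σ : Equiv.Perm (Fin K)) (hsorted : Antitone (fun i => w (σ i)))
    (S : Finset (Fin K))
    (hS : S = Finset.univ.filter
      (fun t : Fin K => (∑ l ∈ Finset.Iic t, w (σ l)) < 1 - T + ((t : ℕ) + 1) * w (σ t)))
    (hSne : S.Nonempty)
    (Q : Fin K) (hQ : Q = S.max' hSne)
    (lam : ℝ) (hlam : lam = ((∑ l ∈ Finset.Iic Q, w (σ l)) - 1 + T) / ((Q : ℕ) + 1))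
    (u : Fin K → ℝ) (hu : u = fun l => max ((w l - lam) / (1 - T)) 0) :
    (∀ l, 0 ≤ u l) ∧ (∑ l, u l) = 1 := by
  have h1T : (0:ℝ) < 1 - T := by linarith
  have hQpos : (0:ℝ) < (Q : ℕ) + 1 := by positivity
  have hQS : Q ∈ S := hQ ▸ S.max'_mem hSne
  have hQS' : (∑ l ∈ Finset.Iic Q, w (σ l)) < 1 - T + ((Q : ℕ) + 1) * w (σ Q) := by
    rw [hS, Finset.mem_filter] at hQS
    exact hQS.2
  have hlamlt : lam < w (σ Q) := by
    rw [hlam, div_lt_iff₀ hQpos]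
    nlinarith
  -- for t > Q, w (σ t) ≤ lam
  have hle : ∀ t : Fin K, Q < t → w (σ t) ≤ lam := by
    intro t ht
    have hsK : (Q : ℕ) + 1 < K := lt_of_le_of_lt ht t.isLt
    set s : Fin K := ⟨(Q : ℕ) + 1, hsK⟩ with hs
    have hsnot : s ∉ S := by
      intro hmem
      have := hQ ▸ S.le_max' s hmem
      have : ((Q:ℕ) + 1 : ℕ) ≤ (Q:ℕ) := this
      omega
    have hIic : Finset.Iic s = insert s (Finset.Iic Q) := by
      ext x
      simp only [Finset.mem_Iic, Finset.mem_insert, Fin.le_def, Fin.ext_iff, hs]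
      omega
    have hsum_s : ∑ l ∈ Finset.Iic s, w (σ l)
        = w (σ s) + ∑ l ∈ Finset.Iic Q, w (σ l) := by
      rw [hIic, Finset.sum_insert (by simp [hs, Fin.le_def])]
    have hsnot' : ¬ ((∑ l ∈ Finset.Iic s, w (σ l)) < 1 - T + ((s : ℕ) + 1) * w (σ s)) := by
      intro h
      exact hsnot (by rw [hS, Finset.mem_filter]; exact ⟨Finset.mem_univ _, h⟩)
    push_neg at hsnot'
    have hsval : ((s : ℕ) : ℝ) = (Q : ℕ) + 1 := by simp [hs]
    rw [hsum_s, hsval] at hsnot'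
    have hws : w (σ s) ≤ lam := by
      rw [hlam, le_div_iff₀ hQpos]
      nlinarith
    have hts : s ≤ t := by
      rw [Fin.le_def]
      exact ht
    exact le_trans (hsorted hts) hws
  constructor
  · intro l; rw [hu]; exact le_max_right _ _
  · have hperm : (∑ l, u l) = ∑ i, u (σ i) := (Equiv.sum_comp σ u).symm
    rw [hperm]
    have hzero : ∀ i ∈ Finset.univ, i ∉ Finset.Iic Q → u (σ i) = 0 := by
      intro i _ hi
      have hQi : Q < i := by simpa using hi
      have : w (σ i) ≤ lam := hle i hQi
      rw [hu]
      simp only [max_eq_right_iff]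
      apply div_nonpos_of_nonpos_of_nonneg <;> linarith
    rw [← Finset.sum_subset (Finset.subset_univ (Finset.Iic Q)) hzero]
    have hpos : ∀ i ∈ Finset.Iic Q, u (σ i) = (w (σ i) - lam) / (1 - T) := by
      intro i hi
      have hiQ : i ≤ Q := Finset.mem_Iic.mp hi
      have : lam < w (σ i) := lt_of_lt_of_le hlamlt (hsorted hiQ)
      rw [hu]
      simp only [max_eq_left_iff]
      apply div_nonneg <;> linarith
    rw [Finset.sum_congr rfl hpos, ← Finset.sum_div, Finset.sum_sub_distrib,
      Finset.sum_const, Fin.card_Iic, nsmul_eq_mul]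
    rw [hlam]
    field_simp
    push_cast
    ring
end
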